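/- arXiv:2505.23993 — 3 statements merged into one kernel-verified Lean document; each statement's English description precedes it below -/
import Mathlib

section
/- Let A, B, C be finite-dimensional real inner product spaces, and let g : A → B and f : B → C be linear maps satisfying f ∘ g = 0. Define the Hodge Laplacian Δ = f† ∘ f + g ∘ g†, where f† and g† denote the adjoints of f and g. Then the quotient space ker(f) / range(g) is linearly isomorphic to ker(Δ). -/
open LinearMap Module

lemma ker_adjoint_eq_orth {A B : Type*}
    [NormedAddCommGroup A] [InnerProductSpace ℝ A] [FiniteDimensional ℝ A]
    [NormedAddCommGroup B] [InnerProductSpace ℝ B] [FiniteDimensional ℝ B]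
    (g : A →ₗ[ℝ] B) : LinearMap.ker (LinearMap.adjoint g) = (LinearMap.range g)ᗮ := by
  ext x
  simp only [LinearMap.mem_ker, Submodule.mem_orthogonal]
  constructor
  · rintro h y ⟨a, rfl⟩
    rw [← LinearMap.adjoint_inner_right, h, inner_zero_right]
  · intro h
    have := h (g (LinearMap.adjoint g x)) ⟨_, rfl⟩
    rw [← LinearMap.adjoint_inner_right] at this
    exact inner_self_eq_zero.mp this

/-- For finite-dimensional real inner product spaces `A`, `B`, `C` and linear maps
`g : A → B`, `f : B → C` with `f ∘ g = 0`, the quotient `ker f ⧸ range g` is linearly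
isomorphic to the kernel of the Hodge Laplacian `Δ = f† ∘ f + g ∘ g†`. -/
theorem stmt_0 {A B C : Type*}
    [NormedAddCommGroup A] [InnerProductSpace ℝ A] [FiniteDimensional ℝ A]
    [NormedAddCommGroup B] [InnerProductSpace ℝ B] [FiniteDimensional ℝ B]
    [NormedAddCommGroup C] [InnerProductSpace ℝ C] [FiniteDimensional ℝ C]
    (g : A →ₗ[ℝ] B) (f : B →ₗ[ℝ] C) (hfg : f ∘ₗ g = 0) :
    Nonempty
      ((↥(LinearMap.ker f) ⧸ (LinearMap.range g).comap (LinearMap.ker f).subtype) ≃ₗ[ℝ]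
        ↥(LinearMap.ker (LinearMap.adjoint f ∘ₗ f + g ∘ₗ LinearMap.adjoint g))) := by
  have hrange : LinearMap.range g ≤ LinearMap.ker f := by
    rintro x ⟨a, rfl⟩
    simpa using LinearMap.congr_fun hfg a
  -- ker Δ = ker f ⊓ ker g†
  have hker : LinearMap.ker (LinearMap.adjoint f ∘ₗ f + g ∘ₗ LinearMap.adjoint g)
      = LinearMap.ker f ⊓ (LinearMap.range g)ᗮ := by
    rw [← ker_adjoint_eq_orth]
    ext x
    simp only [LinearMap.mem_ker, Submodule.mem_inf, LinearMap.add_apply, LinearMap.comp_apply]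
    constructor
    · intro h
      have h0 : (inner ℝ x (LinearMap.adjoint f (f x) + g (LinearMap.adjoint g x)) : ℝ) = 0 := by
        rw [h, inner_zero_right]
      rw [inner_add_right, LinearMap.adjoint_inner_right,
        ← LinearMap.adjoint_inner_left g, real_inner_self_eq_norm_sq,
        real_inner_self_eq_norm_sq] at h0
      have h1 : f x = 0 := by
        have := add_eq_zero_iff_of_nonneg (sq_nonneg ‖f x‖) (sq_nonneg ‖LinearMap.adjoint g x‖)
        rw [this] at h0
        exact norm_eq_zero.mp (pow_eq_zero_iff (by norm_num) |>.mp h0.1)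
      have h2 : LinearMap.adjoint g x = 0 := by
        rw [h1, map_zero, zero_add] at h
        have h0' : (inner ℝ (LinearMap.adjoint g x) (LinearMap.adjoint g x) : ℝ) = 0 := by
          rw [LinearMap.adjoint_inner_right, h, inner_zero_left]
        exact inner_self_eq_zero.mp h0'
      exact ⟨h1, h2⟩
    · rintro ⟨h1, h2⟩
      rw [h1, h2, map_zero, map_zero, add_zero]
  -- dimension counting
  have e1 : Module.finrank ℝ
      ((↥(LinearMap.ker f) ⧸ (LinearMap.range g).comap (LinearMap.ker f).subtype))
      + Module.finrank ℝ ((LinearMap.range g).comap (LinearMap.ker f).subtype)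
      = Module.finrank ℝ (LinearMap.ker f) := by
    exact Submodule.finrank_quotient_add_finrank _

  have e2 : Module.finrank ℝ ((LinearMap.range g).comap (LinearMap.ker f).subtype)
      = Module.finrank ℝ (LinearMap.range g) :=
    (Submodule.comapSubtypeEquivOfLe hrange).finrank_eq
  have e3 := Submodule.finrank_add_inf_finrank_orthogonal hrange
  refine ⟨LinearEquiv.ofFinrankEq _ _ ?_⟩
  rw [hker]
  have : (LinearMap.ker f ⊓ (LinearMap.range g)ᗮ : Submodule ℝ B)
      = ((LinearMap.range g)ᗮ ⊓ LinearMap.ker f : Submodule ℝ B) := inf_comm _ _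
  rw [this]
  omega
end

section
/- Let G be a simple graph on vertex set Fin n with decidable adjacency, let r : Fin n → (Fin 3 → ℝ) assign 3D coordinates to vertices, let γ > 0, and assume r i ≠ r j whenever {i,j} is an edge of G. Fix an orientation of the edges, assigning to each edge e the ordered pair (i_e, j_e) with e = {i_e, j_e}. Define the block coboundary matrix B, with rows indexed by edges of G and columns indexed by pairs (v, a) ∈ Fin n × Fin 3, by B e (v, a) = ε · (√γ / ‖r j_e − r i_e‖) · (r j_e a − r i_e a), where ε = 1 if v = i_e, ε = −1 if v = j_e, and B e (v,a) = 0 otherwise, and ‖·‖ is the Euclidean norm on Fin 3 → ℝ. Then the matrix H = Bᵀ * B satisfies: (1) for i ≠ j with {i,j} an edge of G, H (i,a) (j,b) = −(γ / ‖r j − r i‖²) · (r j a − r i a)(r j b − r i b); (2) for i ≠ j with {i,j} not an edge, H (i,a) (j,b) = 0; (3) H (i,a) (i,b) = ∑_{j adjacent to i} (γ / ‖r j − r i‖²) · (r j a − r i a)(r j b − r i b). -/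
open Matrix

private lemma aux_prod {γ S x y : ℝ} (hγ : 0 ≤ γ) (hS : 0 < S) :
    (Real.sqrt γ / Real.sqrt S * x) * (Real.sqrt γ / Real.sqrt S * y) = γ / S * (x * y) := by
  have h1 : Real.sqrt γ * Real.sqrt γ = γ := Real.mul_self_sqrt hγ
  have h2 : Real.sqrt S * Real.sqrt S = S := Real.mul_self_sqrt hS.le
  have h3 : (Real.sqrt γ / Real.sqrt S) * (Real.sqrt γ / Real.sqrt S) = γ / S := by
    rw [div_mul_div_comm, h1, h2]
  calc (Real.sqrt γ / Real.sqrt S * x) * (Real.sqrt γ / Real.sqrt S * y)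
      = (Real.sqrt γ / Real.sqrt S) * (Real.sqrt γ / Real.sqrt S) * (x * y) := by ring
    _ = γ / S * (x * y) := by rw [h3]

private lemma aux_S_pos {u v : Fin 3 → ℝ} (h : u ≠ v) : 0 < ∑ c, (v c - u c) ^ 2 := by
  obtain ⟨c, hc⟩ := Function.ne_iff.mp h
  have h1 : 0 < (v c - u c) ^ 2 := by
    have h2 : v c - u c ≠ 0 := sub_ne_zero.mpr (Ne.symm hc)
    positivity
  exact lt_of_lt_of_le h1 (Finset.single_le_sum (f := fun c => (v c - u c) ^ 2)
    (fun c _ => sq_nonneg _) (Finset.mem_univ c))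

/-- The ANM Hessian matrix `H = Bᵀ * B` of the coboundary matrix `B` of the ANM-based
cellular sheaf on a graph embedded in `ℝ³`: its off-diagonal blocks are
`−(γ/‖r j − r i‖²)·(r j a − r i a)(r j b − r i b)` for edges (and `0` for non-edges), and
its diagonal blocks are the corresponding sums over neighbors. -/
theorem stmt_6 {n : ℕ} (G : SimpleGraph (Fin n)) [DecidableRel G.Adj]
    (r : Fin n → Fin 3 → ℝ) (γ : ℝ) (hγ : 0 < γ)
    (hr : ∀ i j, G.Adj i j → r i ≠ r j)
    (o : G.edgeSet → Fin n × Fin n)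
    (ho1 : ∀ e, (o e).1 ≠ (o e).2)
    (ho2 : ∀ e : G.edgeSet, (e : Sym2 (Fin n)) = s((o e).1, (o e).2))
    (B : Matrix G.edgeSet (Fin n × Fin 3) ℝ)
    (hB : ∀ (e : G.edgeSet) (v : Fin n) (a : Fin 3), B e (v, a) =
      if v = (o e).1 then
        Real.sqrt γ / Real.sqrt (∑ c, (r (o e).2 c - r (o e).1 c) ^ 2) *
          (r (o e).2 a - r (o e).1 a)
      else if v = (o e).2 then
        -(Real.sqrt γ / Real.sqrt (∑ c, (r (o e).2 c - r (o e).1 c) ^ 2) *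
          (r (o e).2 a - r (o e).1 a))
      else 0) :
    (∀ (i j : Fin n) (a b : Fin 3), i ≠ j → G.Adj i j →
      (Bᵀ * B) (i, a) (j, b) =
        -(γ / ∑ c, (r j c - r i c) ^ 2) * ((r j a - r i a) * (r j b - r i b))) ∧
    (∀ (i j : Fin n) (a b : Fin 3), i ≠ j → ¬G.Adj i j → (Bᵀ * B) (i, a) (j, b) = 0) ∧
    (∀ (i : Fin n) (a b : Fin 3), (Bᵀ * B) (i, a) (i, b) =
      ∑ j ∈ G.neighborFinset i,
        γ / (∑ c, (r j c - r i c) ^ 2) * ((r j a - r i a) * (r j b - r i b))) := by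
  have hadj : ∀ e : G.edgeSet, G.Adj (o e).1 (o e).2 := by
    intro e
    have h := e.2
    rw [ho2 e] at h
    exact h
  have hB0 : ∀ (e : G.edgeSet) (v : Fin n) (a : Fin 3),
      v ≠ (o e).1 → v ≠ (o e).2 → B e (v, a) = 0 := by
    intro e v a h1 h2
    rw [hB, if_neg h1, if_neg h2]
  refine ⟨?_, ?_, ?_⟩
  · -- off-diagonal, adjacent
    intro i j a b hij hA
    rw [Matrix.mul_apply]
    simp only [Matrix.transpose_apply]
    have he₀ : s(i, j) ∈ G.edgeSet := G.mem_edgeSet.mpr hA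
    set e₀ : G.edgeSet := ⟨s(i, j), he₀⟩ with he₀def
    rw [Finset.sum_eq_single e₀]
    · have h : s(i, j) = s((o e₀).1, (o e₀).2) := ho2 e₀
      rcases Sym2.eq_iff.mp h with ⟨hp, hq⟩ | ⟨hp, hq⟩
      · rw [hB, hB, if_pos hp,
          if_neg (fun h' => ho1 e₀ (h'.symm.trans hq)), if_pos hq]
        rw [← hp, ← hq]
        have hS : 0 < ∑ c, (r j c - r i c) ^ 2 := aux_S_pos (hr i j hA)
        rw [mul_neg, aux_prod hγ.le hS]
        ring
      · -- i = (o e₀).2, j = (o e₀).1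
        rw [hB, hB, if_neg (fun h' => ho1 e₀ (h'.symm.trans hp)), if_pos hp,
          if_pos hq]
        rw [← hq, ← hp]
        have hS : 0 < ∑ c, (r i c - r j c) ^ 2 := aux_S_pos (hr j i hA.symm)
        have hSS : ∑ c, (r i c - r j c) ^ 2 = ∑ c, (r j c - r i c) ^ 2 :=
          Finset.sum_congr rfl (fun c _ => by ring)
        rw [neg_mul, aux_prod hγ.le hS, hSS]
        ring
    · intro e _ hne
      by_cases hi1 : i = (o e).1
      · by_cases hj2 : j = (o e).2
        · exact absurd (Subtype.ext (by rw [ho2 e, ← hi1, ← hj2] : (e : Sym2 (Fin n)) = s(i, j))) hne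
        · by_cases hj1 : j = (o e).1
          · exact absurd (hi1.trans hj1.symm) hij
          · rw [hB0 e j b hj1 hj2, mul_zero]
      · by_cases hi2 : i = (o e).2
        · by_cases hj1 : j = (o e).1
          · refine absurd (Subtype.ext ?_) hne
            show (e : Sym2 (Fin n)) = s(i, j)
            rw [ho2 e, ← hi2, ← hj1, Sym2.eq_swap]
          · by_cases hj2 : j = (o e).2
            · exact absurd (hi2.trans hj2.symm) hij
            · rw [hB0 e j b hj1 hj2, mul_zero]
        · rw [hB0 e i a hi1 hi2, zero_mul]
    · intro h
      exact absurd (Finset.mem_univ e₀) h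
  · -- off-diagonal, non-adjacent
    intro i j a b hij hA
    rw [Matrix.mul_apply]
    simp only [Matrix.transpose_apply]
    apply Finset.sum_eq_zero
    intro e _
    by_cases hi1 : i = (o e).1
    · by_cases hj2 : j = (o e).2
      · exact absurd (by rw [hi1, hj2]; exact hadj e) hA
      · by_cases hj1 : j = (o e).1
        · exact absurd (hi1.trans hj1.symm) hij
        · rw [hB0 e j b hj1 hj2, mul_zero]
    · by_cases hi2 : i = (o e).2
      · by_cases hj1 : j = (o e).1
        · exact absurd (by rw [hi2, hj1]; exact (hadj e).symm) hA
        · by_cases hj2 : j = (o e).2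
          · exact absurd (hi2.trans hj2.symm) hij
          · rw [hB0 e j b hj1 hj2, mul_zero]
      · rw [hB0 e i a hi1 hi2, zero_mul]
  · -- diagonal
    intro i a b
    rw [Matrix.mul_apply]
    simp only [Matrix.transpose_apply]
    have hfilter : ∀ e ∈ (Finset.univ : Finset G.edgeSet),
        B e (i, a) * B e (i, b) ≠ 0 → (i = (o e).1 ∨ i = (o e).2) := by
      intro e _ hne
      by_contra hP
      push_neg at hP
      rw [hB0 e i a hP.1 hP.2, zero_mul] at hne
      exact hne rfl
    rw [← Finset.sum_filter_of_ne hfilter]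
    refine Finset.sum_bij' (fun e _ => if i = (o e).1 then (o e).2 else (o e).1)
      (fun v hv => (⟨s(i, v), G.mem_edgeSet.mpr ((G.mem_neighborFinset i v).mp hv)⟩ : G.edgeSet))
      ?_ ?_ ?_ ?_ ?_
    · intro e he
      rw [Finset.mem_filter] at he
      rw [SimpleGraph.mem_neighborFinset]
      beta_reduce
      by_cases h1 : i = (o e).1
      · rw [if_pos h1, h1]; exact hadj e
      · rcases he.2 with h | h2
        · exact absurd h h1
        · rw [if_neg h1, h2]; exact (hadj e).symm
    · intro v hv
      rw [Finset.mem_filter]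
      refine ⟨Finset.mem_univ _, ?_⟩
      set e' : G.edgeSet := ⟨s(i, v), G.mem_edgeSet.mpr ((G.mem_neighborFinset i v).mp hv)⟩
      have h : s(i, v) = s((o e').1, (o e').2) := ho2 e'
      rcases Sym2.eq_iff.mp h with ⟨hp, _⟩ | ⟨hp, _⟩
      · exact Or.inl hp
      · exact Or.inr hp
    · intro e he
      rw [Finset.mem_filter] at he
      apply Subtype.ext
      by_cases h1 : i = (o e).1
      · show s(i, if i = (o e).1 then (o e).2 else (o e).1) = (e : Sym2 (Fin n))
        rw [if_pos h1, h1, ho2 e]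
      · rcases he.2 with h | h2
        · exact absurd h h1
        · show s(i, if i = (o e).1 then (o e).2 else (o e).1) = (e : Sym2 (Fin n))
          rw [if_neg h1, h2, Sym2.eq_swap, ho2 e]
    · intro v hv
      set e' : G.edgeSet := ⟨s(i, v), G.mem_edgeSet.mpr ((G.mem_neighborFinset i v).mp hv)⟩
      have hiv : i ≠ v := ((G.mem_neighborFinset i v).mp hv).ne
      have h : s(i, v) = s((o e').1, (o e').2) := ho2 e'
      beta_reduce
      rcases Sym2.eq_iff.mp h with ⟨hp, hq⟩ | ⟨hp, hq⟩
      · rw [if_pos hp]; exact hq.symm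
      · rw [if_neg (fun h' => hiv (h'.trans hq.symm))]; exact hq.symm
    · intro e he
      rw [Finset.mem_filter] at he
      beta_reduce
      by_cases h1 : i = (o e).1
      · rw [if_pos h1, hB, hB, if_pos h1, if_pos h1, ← h1]
        have hS : 0 < ∑ c, (r (o e).2 c - r i c) ^ 2 :=
          aux_S_pos (hr i (o e).2 (h1 ▸ hadj e))
        exact aux_prod hγ.le hS
      · rcases he.2 with h | h2
        · exact absurd h h1
        · rw [if_neg h1, hB, hB, if_neg h1, if_neg h1, if_pos h2, if_pos h2, ← h2]
          have hS : 0 < ∑ c, (r i c - r (o e).1 c) ^ 2 :=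
            aux_S_pos (hr (o e).1 i (by rw [h2]; exact hadj e))
          have hSS : ∑ c, (r i c - r (o e).1 c) ^ 2 = ∑ c, (r (o e).1 c - r i c) ^ 2 :=
            Finset.sum_congr rfl (fun c _ => by ring)
          rw [neg_mul_neg, aux_prod hγ.le hS, hSS]
          ring
end

section
/- Let V be a finite linearly ordered type, R a commutative ring, and w : Finset V → Rˣ a function into the units of R. For a finset σ and x ∉ σ, define the incidence sign ε(σ, x) = (−1)^{|{y ∈ σ | y < x}|}. Define the weighted operator ∂ on functions f : Finset V → R by (∂f)(σ) = ∑_{x ∉ σ} ε(σ, x) · (w(insert x σ) · w(σ)⁻¹) · f(insert x σ), where the sum is over all x ∈ V not in σ. Then ∂ ∘ ∂ = 0; that is, for every f : Finset V → R and every finset σ, (∂(∂f))(σ) = 0. -/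
lemma card_filter_insert_lt {V : Type*} [Fintype V] [LinearOrder V]
    (σ : Finset V) (x y : V) (hx : x ∉ σ) :
    ((insert x σ).filter (· < y)).card
      = (σ.filter (· < y)).card + if x < y then 1 else 0 := by
  rw [Finset.filter_insert]
  split <;> simp_all [Finset.card_insert_of_notMem, Finset.mem_filter]

lemma sign_swap {V : Type*} [Fintype V] [LinearOrder V] {R : Type*} [CommRing R]
    (σ : Finset V) (x y : V) (hxy : x ≠ y) (hx : x ∉ σ) (hy : y ∉ σ) :
    (-1 : R) ^ (σ.filter (· < x)).card *
      (-1 : R) ^ (((insert x σ)).filter (· < y)).card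
    = -((-1 : R) ^ (σ.filter (· < y)).card *
      (-1 : R) ^ (((insert y σ)).filter (· < x)).card) := by
  rw [card_filter_insert_lt σ x y hx, card_filter_insert_lt σ y x hy]
  rcases hxy.lt_or_gt with h | h
  · rw [if_pos h, if_neg (not_lt.2 h.le)]
    ring
  · rw [if_neg (not_lt.2 h.le), if_pos h]
    ring

lemma units_key {R : Type*} [CommRing R] (a b c : Rˣ) :
    a * b⁻¹ * (c * a⁻¹) = c * b⁻¹ := by
  rw [mul_comm (a * b⁻¹) (c * a⁻¹), mul_assoc, inv_mul_cancel_left]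

/-- The weighted boundary operator with unit weights `w : Finset V → Rˣ` and incidence
signs `ε(σ, x) = (−1)^{|{y ∈ σ | y < x}|}` squares to zero. -/
theorem stmt_14 {V : Type*} [Fintype V] [LinearOrder V] {R : Type*} [CommRing R]
    (w : Finset V → Rˣ)
    (D : (Finset V → R) → Finset V → R)
    (hD : ∀ (f : Finset V → R) (σ : Finset V),
      D f σ = ∑ x ∈ Finset.univ.filter (· ∉ σ),
        (-1 : R) ^ (σ.filter (· < x)).card *
          ((w (insert x σ) * (w σ)⁻¹ : Rˣ) : R) * f (insert x σ)) :
    ∀ (f : Finset V → R) (σ : Finset V), D (D f) σ = 0 := by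
  intro f σ
  rw [hD]
  simp only [hD, Finset.mul_sum]
  rw [Finset.sum_sigma']
  refine Finset.sum_involution (fun p _ => ⟨p.2, p.1⟩) ?_ ?_ ?_ ?_
  · rintro ⟨x, y⟩ hp
    simp only [Finset.mem_sigma, Finset.mem_filter, Finset.mem_univ, true_and,
      Finset.mem_insert, not_or] at hp
    obtain ⟨hx, hyx, hy⟩ := hp
    have hxy : x ≠ y := fun h => hyx h.symm
    have hcomm : insert y (insert x σ) = insert x (insert y σ) := Finset.insert_comm y x σ
    simp only [hcomm]
    have hw : ((w (insert x σ) * (w σ)⁻¹ : Rˣ) : R) *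
        ((w (insert x (insert y σ)) * (w (insert x σ))⁻¹ : Rˣ) : R)
        = ((w (insert y σ) * (w σ)⁻¹ : Rˣ) : R) *
        ((w (insert x (insert y σ)) * (w (insert y σ))⁻¹ : Rˣ) : R) := by
      rw [← Units.val_mul, ← Units.val_mul, units_key, units_key]
    have hs := sign_swap (R := R) σ x y hxy hx hy
    linear_combination
      (((w (insert x σ) * (w σ)⁻¹ : Rˣ) : R) *
        ((w (insert x (insert y σ)) * (w (insert x σ))⁻¹ : Rˣ) : R) *
        f (insert x (insert y σ))) * hs -
      ((-1 : R) ^ (σ.filter (· < y)).card *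
        (-1 : R) ^ ((insert y σ).filter (· < x)).card *
        f (insert x (insert y σ))) * hw
  · rintro ⟨x, y⟩ hp _
    simp only [Finset.mem_sigma, Finset.mem_filter, Finset.mem_univ, true_and,
      Finset.mem_insert, not_or] at hp
    exact fun h => hp.2.1 (congrArg Sigma.fst h)
  · rintro ⟨x, y⟩ hp
    simp only [Finset.mem_sigma, Finset.mem_filter, Finset.mem_univ, true_and,
      Finset.mem_insert, not_or] at hp ⊢
    exact ⟨hp.2.2, fun h => hp.2.1 h.symm, hp.1⟩
  · rintro ⟨x, y⟩ hp
    rfl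
end
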